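/- The subgroup of SL₂(ℤ) generated by A = [[1,4],[0,1]] and B = [[0,1],[-1,0]] has infinite index in SL₂(ℤ). -/

import Mathlib

def A13 : Matrix.SpecialLinearGroup (Fin 2) ℤ := ⟨!![1, 4; 0, 1], by decide⟩
def B13 : Matrix.SpecialLinearGroup (Fin 2) ℤ := ⟨!![0, 1; -1, 0], by decide⟩

namespace Stmt13Aux

abbrev SL2 := Matrix.SpecialLinearGroup (Fin 2) ℤ

/-- Rationals of the form `4a₁ - 1/(4a₂ - 1/(...))` : "minus continued fractions" with all
partial quotients divisible by 4. -/
inductive Nice : ℚ → Prop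
  | base (k : ℤ) : Nice (4 * k)
  | step (k : ℤ) (y : ℚ) (hy : Nice y) (h2 : 2 ≤ |y|) : Nice (4 * k - 1 / y)

lemma nice_bound {x : ℚ} (h : Nice x) : ∃ k : ℤ, |x - 4 * k| ≤ 1 / 2 := by
  induction h with
  | base k => exact ⟨k, by simp⟩
  | step k y hy h2 ih =>
    refine ⟨k, ?_⟩
    have he : (4 * (k : ℚ) - 1 / y) - 4 * k = -(1 / y) := by ring
    rw [he, abs_neg, abs_div, abs_one]
    rw [div_le_div_iff₀ (by positivity) (by norm_num)]
    linarith

lemma nice_shift {x : ℚ} (j : ℤ) (h : Nice x) : Nice (x + 4 * j) := by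
  cases h with
  | base k =>
    have : (4 * (k : ℚ)) + 4 * j = 4 * ((k + j : ℤ) : ℚ) := by push_cast; ring
    rw [this]; exact Nice.base _
  | step k y hy h2 =>
    have : (4 * (k : ℚ) - 1 / y) + 4 * j = 4 * ((k + j : ℤ) : ℚ) - 1 / y := by push_cast; ring
    rw [this]; exact Nice.step _ y hy h2

lemma nice_big_inv {x : ℚ} (h : Nice x) (h2 : 2 ≤ |x|) : Nice (-1 / x) := by
  have := Nice.step 0 x h h2
  simpa [neg_div] using this

lemma nice_inv {x : ℚ} (h : Nice x) (hx : x ≠ 0) : Nice (-1 / x) := by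
  rcases le_or_gt 2 |x| with hbig | hsmall
  · exact nice_big_inv h hbig
  · cases h with
    | base k =>
      exfalso
      have hk : k ≠ 0 := by rintro rfl; simp at hx
      have h1 : (1 : ℤ) ≤ |k| := Int.one_le_abs hk
      have h1q : (1 : ℚ) ≤ |(k : ℚ)| := by
        rw [← Int.cast_abs, ← Int.cast_one, Int.cast_le]; exact h1
      rw [abs_mul, show |(4 : ℚ)| = 4 by norm_num] at hsmall
      linarith
    | step k y hy h2 =>
      have hyne : y ≠ 0 := by
        intro h0; rw [h0] at h2; norm_num at h2
      have hinv : |1 / y| ≤ 1 / 2 := by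
        rw [abs_div, abs_one, div_le_div_iff₀ (by positivity) (by norm_num)]
        linarith
      have hk : k = 0 := by
        by_contra hk0
        have h1q : (1 : ℚ) ≤ |(k : ℚ)| := by
          rw [← Int.cast_abs, ← Int.cast_one, Int.cast_le]
          exact Int.one_le_abs hk0
        have h4k : (4 : ℚ) ≤ |4 * (k : ℚ)| := by
          rw [abs_mul, show |(4 : ℚ)| = 4 by norm_num]; linarith
        have htri := abs_sub_abs_le_abs_sub (4 * (k : ℚ)) (1 / y)
        linarith
      subst hk
      have hxy : (-1 : ℚ) / (4 * ((0 : ℤ) : ℚ) - 1 / y) = y := by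
        push_cast
        ring_nf
        field_simp
      rw [hxy]; exact hy

/-- The invariant preserved by left multiplication by the generators. -/
def Ψ (g : SL2) : Prop :=
  ((g : Matrix (Fin 2) (Fin 2) ℤ) 1 0 = 0) ∨
    Nice (((g : Matrix (Fin 2) (Fin 2) ℤ) 0 0 : ℚ) / ((g : Matrix (Fin 2) (Fin 2) ℤ) 1 0 : ℚ))

def Ainv : SL2 := ⟨!![1, -4; 0, 1], by decide⟩
def Binv : SL2 := ⟨!![0, -1; 1, 0], by decide⟩

lemma A13_inv : A13⁻¹ = Ainv := by
  apply inv_eq_of_mul_eq_one_right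
  apply Subtype.ext
  show (A13 : Matrix (Fin 2) (Fin 2) ℤ) * !![1, -4; 0, 1] = 1
  simp [A13]
  decide

lemma B13_inv : B13⁻¹ = Binv := by
  apply inv_eq_of_mul_eq_one_right
  apply Subtype.ext
  show (B13 : Matrix (Fin 2) (Fin 2) ℤ) * !![0, -1; 1, 0] = 1
  simp [B13]
  decide

lemma psi_shift {g : SL2} (j : ℤ) (a c : ℤ)
    (hac : (c = 0 ∨ Nice ((a : ℚ) / (c : ℚ))))
    (h0 : (g : Matrix (Fin 2) (Fin 2) ℤ) 0 0 = a + 4 * j * c)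
    (h1 : (g : Matrix (Fin 2) (Fin 2) ℤ) 1 0 = c) : Ψ g := by
  by_cases hc : c = 0
  · left; rw [h1, hc]
  · rcases hac with hc' | hnice
    · exact absurd hc' hc
    · right
      rw [h0, h1]
      have hcq : (c : ℚ) ≠ 0 := Int.cast_ne_zero.mpr hc
      have : ((a + 4 * j * c : ℤ) : ℚ) / (c : ℚ) = (a : ℚ) / c + 4 * (j : ℚ) := by
        push_cast
        field_simp
      rw [this]
      exact nice_shift j hnice

lemma psi_flip {g : SL2} (a c : ℤ)
    (hac : (c = 0 ∨ Nice ((a : ℚ) / (c : ℚ))))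
    (hcol : ((g : Matrix (Fin 2) (Fin 2) ℤ) 0 0 = c ∧ (g : Matrix (Fin 2) (Fin 2) ℤ) 1 0 = -a)
      ∨ ((g : Matrix (Fin 2) (Fin 2) ℤ) 0 0 = -c ∧ (g : Matrix (Fin 2) (Fin 2) ℤ) 1 0 = a)) :
    Ψ g := by
  by_cases ha : a = 0
  · left
    rcases hcol with ⟨_, h1⟩ | ⟨_, h1⟩ <;> rw [h1, ha] <;> ring
  · right
    have haq : (a : ℚ) ≠ 0 := Int.cast_ne_zero.mpr ha
    have hrat : ((g : Matrix (Fin 2) (Fin 2) ℤ) 0 0 : ℚ) / ((g : Matrix (Fin 2) (Fin 2) ℤ) 1 0 : ℚ)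
        = (c : ℚ) / (-a : ℚ) := by
      rcases hcol with ⟨h0, h1⟩ | ⟨h0, h1⟩ <;> rw [h0, h1] <;> push_cast <;>
        rw [div_eq_div_iff (by simpa using haq) (by simpa using haq)] <;> ring
    rw [hrat]
    rcases hac with hc | hnice
    · subst hc
      simpa using Nice.base 0
    · by_cases hc : c = 0
      · subst hc
        simpa using Nice.base 0
      · have hcq : (c : ℚ) ≠ 0 := Int.cast_ne_zero.mpr hc
        have hx : (a : ℚ) / c ≠ 0 := div_ne_zero haq hcq
        have key := nice_inv hnice hx
        have heq : (-1 : ℚ) / ((a : ℚ) / c) = (c : ℚ) / (-a : ℚ) := by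
          rw [div_eq_div_iff (div_ne_zero haq hcq) (neg_ne_zero.mpr haq)]
          field_simp
        rwa [heq] at key

lemma psi_closure {g : SL2} (hg : g ∈ Subgroup.closure ({A13, B13} : Set SL2)) : Ψ g := by
  induction hg using Subgroup.closure_induction_left with
  | one => left; simp
  | mul_left x hx y hy ih =>
    simp only [Set.mem_insert_iff, Set.mem_singleton_iff] at hx
    rcases hx with rfl | rfl
    · refine psi_shift 1 ((y : Matrix (Fin 2) (Fin 2) ℤ) 0 0)
        ((y : Matrix (Fin 2) (Fin 2) ℤ) 1 0) ih ?_ ?_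
      · show ((A13 * y : SL2) : Matrix (Fin 2) (Fin 2) ℤ) 0 0 = _
        rw [Matrix.SpecialLinearGroup.coe_mul]
        simp [A13, Matrix.mul_apply, Fin.sum_univ_two]
      · show ((A13 * y : SL2) : Matrix (Fin 2) (Fin 2) ℤ) 1 0 = _
        rw [Matrix.SpecialLinearGroup.coe_mul]
        simp [A13, Matrix.mul_apply, Fin.sum_univ_two]
    · refine psi_flip ((y : Matrix (Fin 2) (Fin 2) ℤ) 0 0)
        ((y : Matrix (Fin 2) (Fin 2) ℤ) 1 0) ih (Or.inl ⟨?_, ?_⟩)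
      · show ((B13 * y : SL2) : Matrix (Fin 2) (Fin 2) ℤ) 0 0 = _
        rw [Matrix.SpecialLinearGroup.coe_mul]
        simp [B13, Matrix.mul_apply, Fin.sum_univ_two]
      · show ((B13 * y : SL2) : Matrix (Fin 2) (Fin 2) ℤ) 1 0 = _
        rw [Matrix.SpecialLinearGroup.coe_mul]
        simp [B13, Matrix.mul_apply, Fin.sum_univ_two]
  | inv_mul_cancel x hx y hy ih =>
    simp only [Set.mem_insert_iff, Set.mem_singleton_iff] at hx
    rcases hx with rfl | rfl
    · rw [A13_inv]
      refine psi_shift (-1) ((y : Matrix (Fin 2) (Fin 2) ℤ) 0 0)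
        ((y : Matrix (Fin 2) (Fin 2) ℤ) 1 0) ih ?_ ?_
      · show ((Ainv * y : SL2) : Matrix (Fin 2) (Fin 2) ℤ) 0 0 = _
        rw [Matrix.SpecialLinearGroup.coe_mul]
        simp [Ainv, Matrix.mul_apply, Fin.sum_univ_two]
      · show ((Ainv * y : SL2) : Matrix (Fin 2) (Fin 2) ℤ) 1 0 = _
        rw [Matrix.SpecialLinearGroup.coe_mul]
        simp [Ainv, Matrix.mul_apply, Fin.sum_univ_two]
    · rw [B13_inv]
      refine psi_flip ((y : Matrix (Fin 2) (Fin 2) ℤ) 0 0)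
        ((y : Matrix (Fin 2) (Fin 2) ℤ) 1 0) ih (Or.inr ⟨?_, ?_⟩)
      · show ((Binv * y : SL2) : Matrix (Fin 2) (Fin 2) ℤ) 0 0 = _
        rw [Matrix.SpecialLinearGroup.coe_mul]
        simp [Binv, Matrix.mul_apply, Fin.sum_univ_two]
      · show ((Binv * y : SL2) : Matrix (Fin 2) (Fin 2) ℤ) 1 0 = _
        rw [Matrix.SpecialLinearGroup.coe_mul]
        simp [Binv, Matrix.mul_apply, Fin.sum_univ_two]

/-- The matrix whose powers give infinitely many distinct cosets. -/
def h : SL2 := ⟨!![2, 1; 1, 1], by decide⟩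

lemma hpow (n : ℕ) : ∃ b d : ℤ, 1 ≤ d ∧ d ≤ b ∧
    ((h ^ (n + 1) : SL2) : Matrix (Fin 2) (Fin 2) ℤ) = !![b + d, b; b, d] := by
  induction n with
  | zero =>
    refine ⟨1, 1, le_refl _, le_refl _, ?_⟩
    have h1 : h ^ (0 + 1) = h := by rw [zero_add, pow_one]
    rw [h1]
    show (!![2, 1; 1, 1] : Matrix (Fin 2) (Fin 2) ℤ) = _
    norm_num
  | succ n ih =>
    obtain ⟨b, d, hd, hdb, hM⟩ := ih
    refine ⟨2 * b + d, b + d, by linarith, by linarith, ?_⟩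
    have : h ^ (n + 1 + 1) = h ^ (n + 1) * h := by rw [pow_succ]
    rw [this]
    have hco : ((h ^ (n + 1) * h : SL2) : Matrix (Fin 2) (Fin 2) ℤ)
        = !![b + d, b; b, d] * (h : Matrix (Fin 2) (Fin 2) ℤ) := by
      rw [← hM]; rfl
    rw [hco]
    ext i j
    fin_cases i <;> fin_cases j <;>
      simp [h, Matrix.mul_apply, Fin.sum_univ_two] <;> ring

lemma not_psi (n : ℕ) : ¬ Ψ (h ^ (n + 1)) := by
  obtain ⟨b, d, hd, hdb, hM⟩ := hpow n
  intro hpsi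
  rcases hpsi with hc | hnice
  · rw [hM] at hc
    simp at hc
    omega
  · rw [hM] at hnice
    have hent0 : (!![b + d, b; b, d] : Matrix (Fin 2) (Fin 2) ℤ) 0 0 = b + d := by simp
    have hent1 : (!![b + d, b; b, d] : Matrix (Fin 2) (Fin 2) ℤ) 1 0 = b := by simp
    rw [hent0, hent1] at hnice
    obtain ⟨k, hk⟩ := nice_bound hnice
    have hbq : (1 : ℚ) ≤ (b : ℚ) := by exact_mod_cast le_trans hd hdb
    have hdq : (1 : ℚ) ≤ (d : ℚ) := by exact_mod_cast hd
    have hdbq : (d : ℚ) ≤ (b : ℚ) := by exact_mod_cast hdb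
    have hbpos : (0 : ℚ) < (b : ℚ) := by linarith
    have hr1 : (1 : ℚ) < ((b + d : ℤ) : ℚ) / (b : ℚ) := by
      rw [lt_div_iff₀ hbpos]
      push_cast
      linarith
    have hr2 : ((b + d : ℤ) : ℚ) / (b : ℚ) ≤ 2 := by
      rw [div_le_iff₀ hbpos]
      push_cast
      linarith
    rcases le_or_gt (k : ℚ) 0 with hk0 | hk1
    · have : |((b + d : ℤ) : ℚ) / (b : ℚ) - 4 * k| ≥ 1 := by
        rw [abs_of_nonneg (by linarith)]
        linarith
      linarith
    · have hk1' : (1 : ℚ) ≤ (k : ℚ) := by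
        have : (1 : ℤ) ≤ k := by exact_mod_cast hk1
        exact_mod_cast this
      have : |((b + d : ℤ) : ℚ) / (b : ℚ) - 4 * k| ≥ 2 := by
        rw [abs_of_nonpos (by linarith)]
        linarith
      linarith

end Stmt13Aux

open Stmt13Aux in
theorem stmt_13 :
    (Subgroup.closure ({A13, B13} : Set (Matrix.SpecialLinearGroup (Fin 2) ℤ))).index = 0 := by
  by_contra hne
  set H := Subgroup.closure ({A13, B13} : Set (Matrix.SpecialLinearGroup (Fin 2) ℤ)) with hH
  have hcard : Nat.card (SL2 ⧸ H) ≠ 0 := hne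
  have hfin : Finite (SL2 ⧸ H) := (Nat.card_ne_zero.mp hcard).2
  have key : ∀ p q : ℕ, p < q →
      (QuotientGroup.mk (h ^ p) : SL2 ⧸ H) ≠ QuotientGroup.mk (h ^ q) := by
    intro p q hpq heq
    rw [QuotientGroup.eq] at heq
    have hsplit : p + (q - p) = q := by omega
    have hpr : (h ^ p)⁻¹ * h ^ q = h ^ (q - p) := by
      have hq : h ^ q = h ^ p * h ^ (q - p) := by rw [← pow_add, hsplit]
      rw [hq, inv_mul_cancel_left]
    rw [hpr] at heq
    obtain ⟨k, hk⟩ : ∃ k, q - p = k + 1 := ⟨q - p - 1, by omega⟩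
    rw [hk] at heq
    exact not_psi k (psi_closure heq)
  obtain ⟨n, m, hnm, he⟩ := Finite.exists_ne_map_eq_of_infinite
    (fun n : ℕ => (QuotientGroup.mk (h ^ n) : SL2 ⧸ H))
  rcases lt_or_gt_of_ne hnm with hlt | hlt
  · exact key n m hlt he
  · exact key m n hlt he.symm
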